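/- Let G be a finite simple graph with no isolated vertices that is (H1, H2, C6)-free and satisfies γt(G) = 2γ(G). Then G has a unique minimum dominating set if and only if no special vertex of G has a true twin other than itself. -/

import Mathlib

open SimpleGraph

namespace TotalDom

variable {V : Type*}

/-- The closed neighborhood `N[v]` of a vertex. -/
def cnbr (G : SimpleGraph V) (v : V) : Set V := insert v (G.neighborSet v)

/-- `S` is a dominating set: every vertex outside `S` has a neighbor in `S`. -/
def IsDomSet (G : SimpleGraph V) (S : Set V) : Prop := ∀ v ∉ S, ∃ u ∈ S, G.Adj u v

/-- `S` is a total dominating set: every vertex has a neighbor in `S`. -/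
def IsTotalDomSet (G : SimpleGraph V) (S : Set V) : Prop := ∀ v : V, ∃ u ∈ S, G.Adj u v

/-- The domination number `γ(G)`. -/
noncomputable def domNum (G : SimpleGraph V) : ℕ :=
  sInf {n | ∃ S : Set V, IsDomSet G S ∧ S.ncard = n}

/-- The total domination number `γₜ(G)`. -/
noncomputable def totalDomNum (G : SimpleGraph V) : ℕ :=
  sInf {n | ∃ S : Set V, IsTotalDomSet G S ∧ S.ncard = n}

/-- A minimum dominating set (γ-set). -/
def IsMinDomSet (G : SimpleGraph V) (S : Set V) : Prop := IsDomSet G S ∧ S.ncard = domNum G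

/-- `S` is a packing: closed neighborhoods of distinct members are disjoint. -/
def IsPacking (G : SimpleGraph V) (S : Set V) : Prop :=
  S.Pairwise fun u v => Disjoint (cnbr G u) (cnbr G v)

/-- `M(v)`: neighbors of `v` having a neighbor outside `N[v]`. -/
def Mset (G : SimpleGraph V) (v : V) : Set V :=
  {u | G.Adj v u ∧ ∃ w, G.Adj u w ∧ w ∉ cnbr G v}

/-- `D(v)`: neighbors `u` of `v` that are not true twins of `v` with `N[u] ⊆ N[v]`. -/
def Dset (G : SimpleGraph V) (v : V) : Set V :=
  {u | G.Adj v u ∧ cnbr G u ≠ cnbr G v ∧ cnbr G u ⊆ cnbr G v}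

/-- `T(v)`: `v` together with its true twins. -/
def Tset (G : SimpleGraph V) (v : V) : Set V := {u | cnbr G u = cnbr G v}

/-- A non-isolated vertex `v` is special if no `u ∈ M(v)` satisfies `D(v) ⊆ N(u)`. -/
def Special (G : SimpleGraph V) (v : V) : Prop :=
  (G.neighborSet v).Nonempty ∧ ¬ ∃ u ∈ Mset G v, Dset G v ⊆ G.neighborSet u

/-- An `S(G)`-set: a set of special vertices containing exactly one vertex from each
true-twin equivalence class of special vertices. -/
def IsSGSet (G : SimpleGraph V) (S : Set V) : Prop :=
  (∀ u ∈ S, Special G u) ∧ ∀ v, Special G v → ∃! u, u ∈ S ∧ u ∈ Tset G v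

/-- `G` has no isolated vertices. -/
def NoIsolated (G : SimpleGraph V) : Prop := ∀ v : V, ∃ u, G.Adj v u

/-- `G` contains no induced copy of `H`. -/
def Free {α : Type*} (H : SimpleGraph α) (G : SimpleGraph V) : Prop := IsEmpty (H ↪g G)

/-- `H₁`: a 6-cycle plus one chord between vertices at distance two along the cycle. -/
def H1 : SimpleGraph (Fin 6) := cycleGraph 6 ⊔ fromEdgeSet {s(0, 2)}

/-- `H₂`: a 6-cycle `x₁x₂x₃x₄x₅x₆` plus the chords `x₂x₆` and `x₃x₅`. -/
def H2 : SimpleGraph (Fin 6) := cycleGraph 6 ⊔ fromEdgeSet {s(1, 5), s(2, 4)}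

/-- A leaf: a vertex of degree one. -/
def IsLeaf (G : SimpleGraph V) (v : V) : Prop := ∃! u, G.Adj v u

/-- A support vertex: a vertex adjacent to a leaf. -/
def IsSupport (G : SimpleGraph V) (v : V) : Prop := ∃ u, G.Adj v u ∧ IsLeaf G u

/-- `sup(G)`: the set of support vertices. -/
def supSet (G : SimpleGraph V) : Set V := {v | IsSupport G v}

variable {G : SimpleGraph V}

/-! ### basic cnbr facts -/

lemma mem_cnbr {u v : V} : u ∈ cnbr G v ↔ u = v ∨ G.Adj v u := by
  simp [cnbr]

lemma self_mem_cnbr (v : V) : v ∈ cnbr G v := mem_cnbr.2 (Or.inl rfl)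

lemma adj_mem_cnbr {u v : V} (h : G.Adj v u) : u ∈ cnbr G v := mem_cnbr.2 (Or.inr h)

lemma adj_of_mem_cnbr {u v : V} (h : u ∈ cnbr G v) (hne : u ≠ v) : G.Adj v u :=
  (mem_cnbr.1 h).resolve_left hne

lemma mem_cnbr_comm {u v : V} : u ∈ cnbr G v ↔ v ∈ cnbr G u := by
  simp only [mem_cnbr]
  constructor
  · rintro (rfl | h)
    · exact Or.inl rfl
    · exact Or.inr h.symm
  · rintro (rfl | h)
    · exact Or.inl rfl
    · exact Or.inr h.symm

variable {G : SimpleGraph V}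

lemma H1_adj_dec (i j : Fin 6) : H1.Adj i j ↔ ((cycleGraph 6).Adj i j ∨ (i = 0 ∧ j = 2) ∨ (i = 2 ∧ j = 0)) := by
  simp only [H1, sup_adj, fromEdgeSet_adj, Set.mem_singleton_iff, Sym2.eq_iff]
  constructor
  · rintro (h | ⟨(⟨rfl, rfl⟩|⟨rfl, rfl⟩), hne⟩)
    · exact .inl h
    · exact .inr (.inl ⟨rfl, rfl⟩)
    · exact .inr (.inr ⟨rfl, rfl⟩)
  · rintro (h | ⟨rfl, rfl⟩ | ⟨rfl, rfl⟩)
    · exact .inl h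
    · exact .inr ⟨.inl ⟨rfl, rfl⟩, by decide⟩
    · exact .inr ⟨.inr ⟨rfl, rfl⟩, by decide⟩

lemma H2_adj_dec (i j : Fin 6) : H2.Adj i j ↔ ((cycleGraph 6).Adj i j ∨ (i = 1 ∧ j = 5) ∨ (i = 5 ∧ j = 1) ∨ (i = 2 ∧ j = 4) ∨ (i = 4 ∧ j = 2)) := by
  simp only [H2, sup_adj, fromEdgeSet_adj, Set.mem_insert_iff, Set.mem_singleton_iff, Sym2.eq_iff]
  constructor
  · rintro (h | ⟨((⟨rfl, rfl⟩|⟨rfl, rfl⟩) | (⟨rfl, rfl⟩|⟨rfl, rfl⟩)), hne⟩)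
    · exact .inl h
    · exact .inr (.inl ⟨rfl, rfl⟩)
    · exact .inr (.inr <| .inl ⟨rfl, rfl⟩)
    · exact .inr (.inr <| .inr <| .inl ⟨rfl, rfl⟩)
    · exact .inr (.inr <| .inr <| .inr ⟨rfl, rfl⟩)
  · rintro (h | ⟨rfl, rfl⟩ | ⟨rfl, rfl⟩ | ⟨rfl, rfl⟩ | ⟨rfl, rfl⟩)
    · exact .inl h
    · exact .inr ⟨.inl (.inl ⟨rfl, rfl⟩), by decide⟩
    · exact .inr ⟨.inl (.inr ⟨rfl, rfl⟩), by decide⟩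
    · exact .inr ⟨.inr (.inl ⟨rfl, rfl⟩), by decide⟩
    · exact .inr ⟨.inr (.inr ⟨rfl, rfl⟩), by decide⟩



lemma embed_C6 (hfree : Free (cycleGraph 6) G) (x0 x1 x2 x3 x4 x5 : V)
    (e01 : G.Adj x0 x1) (e05 : G.Adj x0 x5) (e12 : G.Adj x1 x2) (e23 : G.Adj x2 x3) (e34 : G.Adj x3 x4) (e45 : G.Adj x4 x5) (n02 : ¬G.Adj x0 x2) (n03 : ¬G.Adj x0 x3) (n04 : ¬G.Adj x0 x4) (n13 : ¬G.Adj x1 x3) (n14 : ¬G.Adj x1 x4) (n15 : ¬G.Adj x1 x5) (n24 : ¬G.Adj x2 x4) (n25 : ¬G.Adj x2 x5) (n35 : ¬G.Adj x3 x5) (d02 : x0 ≠ x2) (d03 : x0 ≠ x3) (d04 : x0 ≠ x4) (d13 : x1 ≠ x3) (d14 : x1 ≠ x4) (d15 : x1 ≠ x5) (d24 : x2 ≠ x4) (d25 : x2 ≠ x5) (d35 : x3 ≠ x5) : False := by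
  have a01 : G.Adj x0 x1 := e01
  have a10 : G.Adj x1 x0 := e01.symm
  have a05 : G.Adj x0 x5 := e05
  have a50 : G.Adj x5 x0 := e05.symm
  have a12 : G.Adj x1 x2 := e12
  have a21 : G.Adj x2 x1 := e12.symm
  have a23 : G.Adj x2 x3 := e23
  have a32 : G.Adj x3 x2 := e23.symm
  have a34 : G.Adj x3 x4 := e34
  have a43 : G.Adj x4 x3 := e34.symm
  have a45 : G.Adj x4 x5 := e45
  have a54 : G.Adj x5 x4 := e45.symm
  have m02 : ¬G.Adj x0 x2 := n02
  have m20 : ¬G.Adj x2 x0 := fun h => n02 h.symm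
  have m03 : ¬G.Adj x0 x3 := n03
  have m30 : ¬G.Adj x3 x0 := fun h => n03 h.symm
  have m04 : ¬G.Adj x0 x4 := n04
  have m40 : ¬G.Adj x4 x0 := fun h => n04 h.symm
  have m13 : ¬G.Adj x1 x3 := n13
  have m31 : ¬G.Adj x3 x1 := fun h => n13 h.symm
  have m14 : ¬G.Adj x1 x4 := n14
  have m41 : ¬G.Adj x4 x1 := fun h => n14 h.symm
  have m15 : ¬G.Adj x1 x5 := n15
  have m51 : ¬G.Adj x5 x1 := fun h => n15 h.symm
  have m24 : ¬G.Adj x2 x4 := n24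
  have m42 : ¬G.Adj x4 x2 := fun h => n24 h.symm
  have m25 : ¬G.Adj x2 x5 := n25
  have m52 : ¬G.Adj x5 x2 := fun h => n25 h.symm
  have m35 : ¬G.Adj x3 x5 := n35
  have m53 : ¬G.Adj x5 x3 := fun h => n35 h.symm
  have q01 : x0 ≠ x1 := e01.ne
  have q10 : x1 ≠ x0 := e01.ne'
  have q05 : x0 ≠ x5 := e05.ne
  have q50 : x5 ≠ x0 := e05.ne'
  have q12 : x1 ≠ x2 := e12.ne
  have q21 : x2 ≠ x1 := e12.ne'
  have q23 : x2 ≠ x3 := e23.ne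
  have q32 : x3 ≠ x2 := e23.ne'
  have q34 : x3 ≠ x4 := e34.ne
  have q43 : x4 ≠ x3 := e34.ne'
  have q45 : x4 ≠ x5 := e45.ne
  have q54 : x5 ≠ x4 := e45.ne'
  have q02 : x0 ≠ x2 := d02
  have q20 : x2 ≠ x0 := d02.symm
  have q03 : x0 ≠ x3 := d03
  have q30 : x3 ≠ x0 := d03.symm
  have q04 : x0 ≠ x4 := d04
  have q40 : x4 ≠ x0 := d04.symm
  have q13 : x1 ≠ x3 := d13
  have q31 : x3 ≠ x1 := d13.symm
  have q14 : x1 ≠ x4 := d14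
  have q41 : x4 ≠ x1 := d14.symm
  have q15 : x1 ≠ x5 := d15
  have q51 : x5 ≠ x1 := d15.symm
  have q24 : x2 ≠ x4 := d24
  have q42 : x4 ≠ x2 := d24.symm
  have q25 : x2 ≠ x5 := d25
  have q52 : x5 ≠ x2 := d25.symm
  have q35 : x3 ≠ x5 := d35
  have q53 : x5 ≠ x3 := d35.symm
  let f : Fin 6 → V := fun i => match i with
    | ⟨0, _⟩ => x0
    | ⟨1, _⟩ => x1
    | ⟨2, _⟩ => x2
    | ⟨3, _⟩ => x3
    | ⟨4, _⟩ => x4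
    | ⟨5, _⟩ => x5
  refine hfree.elim ⟨⟨f, ?_⟩, @fun a b => ?_⟩
  · intro a b hab
    match a, b with
    | ⟨0, _⟩, ⟨0, _⟩ => rfl
    | ⟨0, _⟩, ⟨1, _⟩ => exact absurd hab q01
    | ⟨0, _⟩, ⟨2, _⟩ => exact absurd hab q02
    | ⟨0, _⟩, ⟨3, _⟩ => exact absurd hab q03
    | ⟨0, _⟩, ⟨4, _⟩ => exact absurd hab q04
    | ⟨0, _⟩, ⟨5, _⟩ => exact absurd hab q05
    | ⟨1, _⟩, ⟨0, _⟩ => exact absurd hab q10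
    | ⟨1, _⟩, ⟨1, _⟩ => rfl
    | ⟨1, _⟩, ⟨2, _⟩ => exact absurd hab q12
    | ⟨1, _⟩, ⟨3, _⟩ => exact absurd hab q13
    | ⟨1, _⟩, ⟨4, _⟩ => exact absurd hab q14
    | ⟨1, _⟩, ⟨5, _⟩ => exact absurd hab q15
    | ⟨2, _⟩, ⟨0, _⟩ => exact absurd hab q20
    | ⟨2, _⟩, ⟨1, _⟩ => exact absurd hab q21
    | ⟨2, _⟩, ⟨2, _⟩ => rfl
    | ⟨2, _⟩, ⟨3, _⟩ => exact absurd hab q23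
    | ⟨2, _⟩, ⟨4, _⟩ => exact absurd hab q24
    | ⟨2, _⟩, ⟨5, _⟩ => exact absurd hab q25
    | ⟨3, _⟩, ⟨0, _⟩ => exact absurd hab q30
    | ⟨3, _⟩, ⟨1, _⟩ => exact absurd hab q31
    | ⟨3, _⟩, ⟨2, _⟩ => exact absurd hab q32
    | ⟨3, _⟩, ⟨3, _⟩ => rfl
    | ⟨3, _⟩, ⟨4, _⟩ => exact absurd hab q34
    | ⟨3, _⟩, ⟨5, _⟩ => exact absurd hab q35
    | ⟨4, _⟩, ⟨0, _⟩ => exact absurd hab q40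
    | ⟨4, _⟩, ⟨1, _⟩ => exact absurd hab q41
    | ⟨4, _⟩, ⟨2, _⟩ => exact absurd hab q42
    | ⟨4, _⟩, ⟨3, _⟩ => exact absurd hab q43
    | ⟨4, _⟩, ⟨4, _⟩ => rfl
    | ⟨4, _⟩, ⟨5, _⟩ => exact absurd hab q45
    | ⟨5, _⟩, ⟨0, _⟩ => exact absurd hab q50
    | ⟨5, _⟩, ⟨1, _⟩ => exact absurd hab q51
    | ⟨5, _⟩, ⟨2, _⟩ => exact absurd hab q52
    | ⟨5, _⟩, ⟨3, _⟩ => exact absurd hab q53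
    | ⟨5, _⟩, ⟨4, _⟩ => exact absurd hab q54
    | ⟨5, _⟩, ⟨5, _⟩ => rfl
  · match a, b with
    | ⟨0, _⟩, ⟨0, _⟩ => exact iff_of_false (G.loopless.irrefl x0) (by decide : ¬(cycleGraph 6).Adj (0:Fin 6) (0:Fin 6))
    | ⟨0, _⟩, ⟨1, _⟩ => exact iff_of_true a01 (by decide : (cycleGraph 6).Adj (0:Fin 6) (1:Fin 6))
    | ⟨0, _⟩, ⟨2, _⟩ => exact iff_of_false m02 (by decide : ¬(cycleGraph 6).Adj (0:Fin 6) (2:Fin 6))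
    | ⟨0, _⟩, ⟨3, _⟩ => exact iff_of_false m03 (by decide : ¬(cycleGraph 6).Adj (0:Fin 6) (3:Fin 6))
    | ⟨0, _⟩, ⟨4, _⟩ => exact iff_of_false m04 (by decide : ¬(cycleGraph 6).Adj (0:Fin 6) (4:Fin 6))
    | ⟨0, _⟩, ⟨5, _⟩ => exact iff_of_true a05 (by decide : (cycleGraph 6).Adj (0:Fin 6) (5:Fin 6))
    | ⟨1, _⟩, ⟨0, _⟩ => exact iff_of_true a10 (by decide : (cycleGraph 6).Adj (1:Fin 6) (0:Fin 6))
    | ⟨1, _⟩, ⟨1, _⟩ => exact iff_of_false (G.loopless.irrefl x1) (by decide : ¬(cycleGraph 6).Adj (1:Fin 6) (1:Fin 6))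
    | ⟨1, _⟩, ⟨2, _⟩ => exact iff_of_true a12 (by decide : (cycleGraph 6).Adj (1:Fin 6) (2:Fin 6))
    | ⟨1, _⟩, ⟨3, _⟩ => exact iff_of_false m13 (by decide : ¬(cycleGraph 6).Adj (1:Fin 6) (3:Fin 6))
    | ⟨1, _⟩, ⟨4, _⟩ => exact iff_of_false m14 (by decide : ¬(cycleGraph 6).Adj (1:Fin 6) (4:Fin 6))
    | ⟨1, _⟩, ⟨5, _⟩ => exact iff_of_false m15 (by decide : ¬(cycleGraph 6).Adj (1:Fin 6) (5:Fin 6))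
    | ⟨2, _⟩, ⟨0, _⟩ => exact iff_of_false m20 (by decide : ¬(cycleGraph 6).Adj (2:Fin 6) (0:Fin 6))
    | ⟨2, _⟩, ⟨1, _⟩ => exact iff_of_true a21 (by decide : (cycleGraph 6).Adj (2:Fin 6) (1:Fin 6))
    | ⟨2, _⟩, ⟨2, _⟩ => exact iff_of_false (G.loopless.irrefl x2) (by decide : ¬(cycleGraph 6).Adj (2:Fin 6) (2:Fin 6))
    | ⟨2, _⟩, ⟨3, _⟩ => exact iff_of_true a23 (by decide : (cycleGraph 6).Adj (2:Fin 6) (3:Fin 6))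
    | ⟨2, _⟩, ⟨4, _⟩ => exact iff_of_false m24 (by decide : ¬(cycleGraph 6).Adj (2:Fin 6) (4:Fin 6))
    | ⟨2, _⟩, ⟨5, _⟩ => exact iff_of_false m25 (by decide : ¬(cycleGraph 6).Adj (2:Fin 6) (5:Fin 6))
    | ⟨3, _⟩, ⟨0, _⟩ => exact iff_of_false m30 (by decide : ¬(cycleGraph 6).Adj (3:Fin 6) (0:Fin 6))
    | ⟨3, _⟩, ⟨1, _⟩ => exact iff_of_false m31 (by decide : ¬(cycleGraph 6).Adj (3:Fin 6) (1:Fin 6))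
    | ⟨3, _⟩, ⟨2, _⟩ => exact iff_of_true a32 (by decide : (cycleGraph 6).Adj (3:Fin 6) (2:Fin 6))
    | ⟨3, _⟩, ⟨3, _⟩ => exact iff_of_false (G.loopless.irrefl x3) (by decide : ¬(cycleGraph 6).Adj (3:Fin 6) (3:Fin 6))
    | ⟨3, _⟩, ⟨4, _⟩ => exact iff_of_true a34 (by decide : (cycleGraph 6).Adj (3:Fin 6) (4:Fin 6))
    | ⟨3, _⟩, ⟨5, _⟩ => exact iff_of_false m35 (by decide : ¬(cycleGraph 6).Adj (3:Fin 6) (5:Fin 6))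
    | ⟨4, _⟩, ⟨0, _⟩ => exact iff_of_false m40 (by decide : ¬(cycleGraph 6).Adj (4:Fin 6) (0:Fin 6))
    | ⟨4, _⟩, ⟨1, _⟩ => exact iff_of_false m41 (by decide : ¬(cycleGraph 6).Adj (4:Fin 6) (1:Fin 6))
    | ⟨4, _⟩, ⟨2, _⟩ => exact iff_of_false m42 (by decide : ¬(cycleGraph 6).Adj (4:Fin 6) (2:Fin 6))
    | ⟨4, _⟩, ⟨3, _⟩ => exact iff_of_true a43 (by decide : (cycleGraph 6).Adj (4:Fin 6) (3:Fin 6))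
    | ⟨4, _⟩, ⟨4, _⟩ => exact iff_of_false (G.loopless.irrefl x4) (by decide : ¬(cycleGraph 6).Adj (4:Fin 6) (4:Fin 6))
    | ⟨4, _⟩, ⟨5, _⟩ => exact iff_of_true a45 (by decide : (cycleGraph 6).Adj (4:Fin 6) (5:Fin 6))
    | ⟨5, _⟩, ⟨0, _⟩ => exact iff_of_true a50 (by decide : (cycleGraph 6).Adj (5:Fin 6) (0:Fin 6))
    | ⟨5, _⟩, ⟨1, _⟩ => exact iff_of_false m51 (by decide : ¬(cycleGraph 6).Adj (5:Fin 6) (1:Fin 6))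
    | ⟨5, _⟩, ⟨2, _⟩ => exact iff_of_false m52 (by decide : ¬(cycleGraph 6).Adj (5:Fin 6) (2:Fin 6))
    | ⟨5, _⟩, ⟨3, _⟩ => exact iff_of_false m53 (by decide : ¬(cycleGraph 6).Adj (5:Fin 6) (3:Fin 6))
    | ⟨5, _⟩, ⟨4, _⟩ => exact iff_of_true a54 (by decide : (cycleGraph 6).Adj (5:Fin 6) (4:Fin 6))
    | ⟨5, _⟩, ⟨5, _⟩ => exact iff_of_false (G.loopless.irrefl x5) (by decide : ¬(cycleGraph 6).Adj (5:Fin 6) (5:Fin 6))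

lemma embed_H1 (hfree : Free H1 G) (x0 x1 x2 x3 x4 x5 : V)
    (e01 : G.Adj x0 x1) (e02 : G.Adj x0 x2) (e05 : G.Adj x0 x5) (e12 : G.Adj x1 x2) (e23 : G.Adj x2 x3) (e34 : G.Adj x3 x4) (e45 : G.Adj x4 x5) (n03 : ¬G.Adj x0 x3) (n04 : ¬G.Adj x0 x4) (n13 : ¬G.Adj x1 x3) (n14 : ¬G.Adj x1 x4) (n15 : ¬G.Adj x1 x5) (n24 : ¬G.Adj x2 x4) (n25 : ¬G.Adj x2 x5) (n35 : ¬G.Adj x3 x5) (d03 : x0 ≠ x3) (d04 : x0 ≠ x4) (d13 : x1 ≠ x3) (d14 : x1 ≠ x4) (d15 : x1 ≠ x5) (d24 : x2 ≠ x4) (d25 : x2 ≠ x5) (d35 : x3 ≠ x5) : False := by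
  have a01 : G.Adj x0 x1 := e01
  have a10 : G.Adj x1 x0 := e01.symm
  have a02 : G.Adj x0 x2 := e02
  have a20 : G.Adj x2 x0 := e02.symm
  have a05 : G.Adj x0 x5 := e05
  have a50 : G.Adj x5 x0 := e05.symm
  have a12 : G.Adj x1 x2 := e12
  have a21 : G.Adj x2 x1 := e12.symm
  have a23 : G.Adj x2 x3 := e23
  have a32 : G.Adj x3 x2 := e23.symm
  have a34 : G.Adj x3 x4 := e34
  have a43 : G.Adj x4 x3 := e34.symm
  have a45 : G.Adj x4 x5 := e45
  have a54 : G.Adj x5 x4 := e45.symm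
  have m03 : ¬G.Adj x0 x3 := n03
  have m30 : ¬G.Adj x3 x0 := fun h => n03 h.symm
  have m04 : ¬G.Adj x0 x4 := n04
  have m40 : ¬G.Adj x4 x0 := fun h => n04 h.symm
  have m13 : ¬G.Adj x1 x3 := n13
  have m31 : ¬G.Adj x3 x1 := fun h => n13 h.symm
  have m14 : ¬G.Adj x1 x4 := n14
  have m41 : ¬G.Adj x4 x1 := fun h => n14 h.symm
  have m15 : ¬G.Adj x1 x5 := n15
  have m51 : ¬G.Adj x5 x1 := fun h => n15 h.symm
  have m24 : ¬G.Adj x2 x4 := n24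
  have m42 : ¬G.Adj x4 x2 := fun h => n24 h.symm
  have m25 : ¬G.Adj x2 x5 := n25
  have m52 : ¬G.Adj x5 x2 := fun h => n25 h.symm
  have m35 : ¬G.Adj x3 x5 := n35
  have m53 : ¬G.Adj x5 x3 := fun h => n35 h.symm
  have q01 : x0 ≠ x1 := e01.ne
  have q10 : x1 ≠ x0 := e01.ne'
  have q02 : x0 ≠ x2 := e02.ne
  have q20 : x2 ≠ x0 := e02.ne'
  have q05 : x0 ≠ x5 := e05.ne
  have q50 : x5 ≠ x0 := e05.ne'
  have q12 : x1 ≠ x2 := e12.ne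
  have q21 : x2 ≠ x1 := e12.ne'
  have q23 : x2 ≠ x3 := e23.ne
  have q32 : x3 ≠ x2 := e23.ne'
  have q34 : x3 ≠ x4 := e34.ne
  have q43 : x4 ≠ x3 := e34.ne'
  have q45 : x4 ≠ x5 := e45.ne
  have q54 : x5 ≠ x4 := e45.ne'
  have q03 : x0 ≠ x3 := d03
  have q30 : x3 ≠ x0 := d03.symm
  have q04 : x0 ≠ x4 := d04
  have q40 : x4 ≠ x0 := d04.symm
  have q13 : x1 ≠ x3 := d13
  have q31 : x3 ≠ x1 := d13.symm
  have q14 : x1 ≠ x4 := d14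
  have q41 : x4 ≠ x1 := d14.symm
  have q15 : x1 ≠ x5 := d15
  have q51 : x5 ≠ x1 := d15.symm
  have q24 : x2 ≠ x4 := d24
  have q42 : x4 ≠ x2 := d24.symm
  have q25 : x2 ≠ x5 := d25
  have q52 : x5 ≠ x2 := d25.symm
  have q35 : x3 ≠ x5 := d35
  have q53 : x5 ≠ x3 := d35.symm
  let f : Fin 6 → V := fun i => match i with
    | ⟨0, _⟩ => x0
    | ⟨1, _⟩ => x1
    | ⟨2, _⟩ => x2
    | ⟨3, _⟩ => x3
    | ⟨4, _⟩ => x4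
    | ⟨5, _⟩ => x5
  refine hfree.elim ⟨⟨f, ?_⟩, @fun a b => ?_⟩
  · intro a b hab
    match a, b with
    | ⟨0, _⟩, ⟨0, _⟩ => rfl
    | ⟨0, _⟩, ⟨1, _⟩ => exact absurd hab q01
    | ⟨0, _⟩, ⟨2, _⟩ => exact absurd hab q02
    | ⟨0, _⟩, ⟨3, _⟩ => exact absurd hab q03
    | ⟨0, _⟩, ⟨4, _⟩ => exact absurd hab q04
    | ⟨0, _⟩, ⟨5, _⟩ => exact absurd hab q05
    | ⟨1, _⟩, ⟨0, _⟩ => exact absurd hab q10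
    | ⟨1, _⟩, ⟨1, _⟩ => rfl
    | ⟨1, _⟩, ⟨2, _⟩ => exact absurd hab q12
    | ⟨1, _⟩, ⟨3, _⟩ => exact absurd hab q13
    | ⟨1, _⟩, ⟨4, _⟩ => exact absurd hab q14
    | ⟨1, _⟩, ⟨5, _⟩ => exact absurd hab q15
    | ⟨2, _⟩, ⟨0, _⟩ => exact absurd hab q20
    | ⟨2, _⟩, ⟨1, _⟩ => exact absurd hab q21
    | ⟨2, _⟩, ⟨2, _⟩ => rfl
    | ⟨2, _⟩, ⟨3, _⟩ => exact absurd hab q23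
    | ⟨2, _⟩, ⟨4, _⟩ => exact absurd hab q24
    | ⟨2, _⟩, ⟨5, _⟩ => exact absurd hab q25
    | ⟨3, _⟩, ⟨0, _⟩ => exact absurd hab q30
    | ⟨3, _⟩, ⟨1, _⟩ => exact absurd hab q31
    | ⟨3, _⟩, ⟨2, _⟩ => exact absurd hab q32
    | ⟨3, _⟩, ⟨3, _⟩ => rfl
    | ⟨3, _⟩, ⟨4, _⟩ => exact absurd hab q34
    | ⟨3, _⟩, ⟨5, _⟩ => exact absurd hab q35
    | ⟨4, _⟩, ⟨0, _⟩ => exact absurd hab q40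
    | ⟨4, _⟩, ⟨1, _⟩ => exact absurd hab q41
    | ⟨4, _⟩, ⟨2, _⟩ => exact absurd hab q42
    | ⟨4, _⟩, ⟨3, _⟩ => exact absurd hab q43
    | ⟨4, _⟩, ⟨4, _⟩ => rfl
    | ⟨4, _⟩, ⟨5, _⟩ => exact absurd hab q45
    | ⟨5, _⟩, ⟨0, _⟩ => exact absurd hab q50
    | ⟨5, _⟩, ⟨1, _⟩ => exact absurd hab q51
    | ⟨5, _⟩, ⟨2, _⟩ => exact absurd hab q52
    | ⟨5, _⟩, ⟨3, _⟩ => exact absurd hab q53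
    | ⟨5, _⟩, ⟨4, _⟩ => exact absurd hab q54
    | ⟨5, _⟩, ⟨5, _⟩ => rfl
  · match a, b with
    | ⟨0, _⟩, ⟨0, _⟩ => exact iff_of_false (G.loopless.irrefl x0) (by rw [H1_adj_dec]; decide : ¬H1.Adj (0:Fin 6) (0:Fin 6))
    | ⟨0, _⟩, ⟨1, _⟩ => exact iff_of_true a01 (by rw [H1_adj_dec]; decide : H1.Adj (0:Fin 6) (1:Fin 6))
    | ⟨0, _⟩, ⟨2, _⟩ => exact iff_of_true a02 (by rw [H1_adj_dec]; decide : H1.Adj (0:Fin 6) (2:Fin 6))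
    | ⟨0, _⟩, ⟨3, _⟩ => exact iff_of_false m03 (by rw [H1_adj_dec]; decide : ¬H1.Adj (0:Fin 6) (3:Fin 6))
    | ⟨0, _⟩, ⟨4, _⟩ => exact iff_of_false m04 (by rw [H1_adj_dec]; decide : ¬H1.Adj (0:Fin 6) (4:Fin 6))
    | ⟨0, _⟩, ⟨5, _⟩ => exact iff_of_true a05 (by rw [H1_adj_dec]; decide : H1.Adj (0:Fin 6) (5:Fin 6))
    | ⟨1, _⟩, ⟨0, _⟩ => exact iff_of_true a10 (by rw [H1_adj_dec]; decide : H1.Adj (1:Fin 6) (0:Fin 6))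
    | ⟨1, _⟩, ⟨1, _⟩ => exact iff_of_false (G.loopless.irrefl x1) (by rw [H1_adj_dec]; decide : ¬H1.Adj (1:Fin 6) (1:Fin 6))
    | ⟨1, _⟩, ⟨2, _⟩ => exact iff_of_true a12 (by rw [H1_adj_dec]; decide : H1.Adj (1:Fin 6) (2:Fin 6))
    | ⟨1, _⟩, ⟨3, _⟩ => exact iff_of_false m13 (by rw [H1_adj_dec]; decide : ¬H1.Adj (1:Fin 6) (3:Fin 6))
    | ⟨1, _⟩, ⟨4, _⟩ => exact iff_of_false m14 (by rw [H1_adj_dec]; decide : ¬H1.Adj (1:Fin 6) (4:Fin 6))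
    | ⟨1, _⟩, ⟨5, _⟩ => exact iff_of_false m15 (by rw [H1_adj_dec]; decide : ¬H1.Adj (1:Fin 6) (5:Fin 6))
    | ⟨2, _⟩, ⟨0, _⟩ => exact iff_of_true a20 (by rw [H1_adj_dec]; decide : H1.Adj (2:Fin 6) (0:Fin 6))
    | ⟨2, _⟩, ⟨1, _⟩ => exact iff_of_true a21 (by rw [H1_adj_dec]; decide : H1.Adj (2:Fin 6) (1:Fin 6))
    | ⟨2, _⟩, ⟨2, _⟩ => exact iff_of_false (G.loopless.irrefl x2) (by rw [H1_adj_dec]; decide : ¬H1.Adj (2:Fin 6) (2:Fin 6))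
    | ⟨2, _⟩, ⟨3, _⟩ => exact iff_of_true a23 (by rw [H1_adj_dec]; decide : H1.Adj (2:Fin 6) (3:Fin 6))
    | ⟨2, _⟩, ⟨4, _⟩ => exact iff_of_false m24 (by rw [H1_adj_dec]; decide : ¬H1.Adj (2:Fin 6) (4:Fin 6))
    | ⟨2, _⟩, ⟨5, _⟩ => exact iff_of_false m25 (by rw [H1_adj_dec]; decide : ¬H1.Adj (2:Fin 6) (5:Fin 6))
    | ⟨3, _⟩, ⟨0, _⟩ => exact iff_of_false m30 (by rw [H1_adj_dec]; decide : ¬H1.Adj (3:Fin 6) (0:Fin 6))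
    | ⟨3, _⟩, ⟨1, _⟩ => exact iff_of_false m31 (by rw [H1_adj_dec]; decide : ¬H1.Adj (3:Fin 6) (1:Fin 6))
    | ⟨3, _⟩, ⟨2, _⟩ => exact iff_of_true a32 (by rw [H1_adj_dec]; decide : H1.Adj (3:Fin 6) (2:Fin 6))
    | ⟨3, _⟩, ⟨3, _⟩ => exact iff_of_false (G.loopless.irrefl x3) (by rw [H1_adj_dec]; decide : ¬H1.Adj (3:Fin 6) (3:Fin 6))
    | ⟨3, _⟩, ⟨4, _⟩ => exact iff_of_true a34 (by rw [H1_adj_dec]; decide : H1.Adj (3:Fin 6) (4:Fin 6))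
    | ⟨3, _⟩, ⟨5, _⟩ => exact iff_of_false m35 (by rw [H1_adj_dec]; decide : ¬H1.Adj (3:Fin 6) (5:Fin 6))
    | ⟨4, _⟩, ⟨0, _⟩ => exact iff_of_false m40 (by rw [H1_adj_dec]; decide : ¬H1.Adj (4:Fin 6) (0:Fin 6))
    | ⟨4, _⟩, ⟨1, _⟩ => exact iff_of_false m41 (by rw [H1_adj_dec]; decide : ¬H1.Adj (4:Fin 6) (1:Fin 6))
    | ⟨4, _⟩, ⟨2, _⟩ => exact iff_of_false m42 (by rw [H1_adj_dec]; decide : ¬H1.Adj (4:Fin 6) (2:Fin 6))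
    | ⟨4, _⟩, ⟨3, _⟩ => exact iff_of_true a43 (by rw [H1_adj_dec]; decide : H1.Adj (4:Fin 6) (3:Fin 6))
    | ⟨4, _⟩, ⟨4, _⟩ => exact iff_of_false (G.loopless.irrefl x4) (by rw [H1_adj_dec]; decide : ¬H1.Adj (4:Fin 6) (4:Fin 6))
    | ⟨4, _⟩, ⟨5, _⟩ => exact iff_of_true a45 (by rw [H1_adj_dec]; decide : H1.Adj (4:Fin 6) (5:Fin 6))
    | ⟨5, _⟩, ⟨0, _⟩ => exact iff_of_true a50 (by rw [H1_adj_dec]; decide : H1.Adj (5:Fin 6) (0:Fin 6))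
    | ⟨5, _⟩, ⟨1, _⟩ => exact iff_of_false m51 (by rw [H1_adj_dec]; decide : ¬H1.Adj (5:Fin 6) (1:Fin 6))
    | ⟨5, _⟩, ⟨2, _⟩ => exact iff_of_false m52 (by rw [H1_adj_dec]; decide : ¬H1.Adj (5:Fin 6) (2:Fin 6))
    | ⟨5, _⟩, ⟨3, _⟩ => exact iff_of_false m53 (by rw [H1_adj_dec]; decide : ¬H1.Adj (5:Fin 6) (3:Fin 6))
    | ⟨5, _⟩, ⟨4, _⟩ => exact iff_of_true a54 (by rw [H1_adj_dec]; decide : H1.Adj (5:Fin 6) (4:Fin 6))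
    | ⟨5, _⟩, ⟨5, _⟩ => exact iff_of_false (G.loopless.irrefl x5) (by rw [H1_adj_dec]; decide : ¬H1.Adj (5:Fin 6) (5:Fin 6))

lemma embed_H2 (hfree : Free H2 G) (x0 x1 x2 x3 x4 x5 : V)
    (e01 : G.Adj x0 x1) (e05 : G.Adj x0 x5) (e12 : G.Adj x1 x2) (e15 : G.Adj x1 x5) (e23 : G.Adj x2 x3) (e24 : G.Adj x2 x4) (e34 : G.Adj x3 x4) (e45 : G.Adj x4 x5) (n02 : ¬G.Adj x0 x2) (n03 : ¬G.Adj x0 x3) (n04 : ¬G.Adj x0 x4) (n13 : ¬G.Adj x1 x3) (n14 : ¬G.Adj x1 x4) (n25 : ¬G.Adj x2 x5) (n35 : ¬G.Adj x3 x5) (d02 : x0 ≠ x2) (d03 : x0 ≠ x3) (d04 : x0 ≠ x4) (d13 : x1 ≠ x3) (d14 : x1 ≠ x4) (d25 : x2 ≠ x5) (d35 : x3 ≠ x5) : False := by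
  have a01 : G.Adj x0 x1 := e01
  have a10 : G.Adj x1 x0 := e01.symm
  have a05 : G.Adj x0 x5 := e05
  have a50 : G.Adj x5 x0 := e05.symm
  have a12 : G.Adj x1 x2 := e12
  have a21 : G.Adj x2 x1 := e12.symm
  have a15 : G.Adj x1 x5 := e15
  have a51 : G.Adj x5 x1 := e15.symm
  have a23 : G.Adj x2 x3 := e23
  have a32 : G.Adj x3 x2 := e23.symm
  have a24 : G.Adj x2 x4 := e24
  have a42 : G.Adj x4 x2 := e24.symm
  have a34 : G.Adj x3 x4 := e34
  have a43 : G.Adj x4 x3 := e34.symm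
  have a45 : G.Adj x4 x5 := e45
  have a54 : G.Adj x5 x4 := e45.symm
  have m02 : ¬G.Adj x0 x2 := n02
  have m20 : ¬G.Adj x2 x0 := fun h => n02 h.symm
  have m03 : ¬G.Adj x0 x3 := n03
  have m30 : ¬G.Adj x3 x0 := fun h => n03 h.symm
  have m04 : ¬G.Adj x0 x4 := n04
  have m40 : ¬G.Adj x4 x0 := fun h => n04 h.symm
  have m13 : ¬G.Adj x1 x3 := n13
  have m31 : ¬G.Adj x3 x1 := fun h => n13 h.symm
  have m14 : ¬G.Adj x1 x4 := n14
  have m41 : ¬G.Adj x4 x1 := fun h => n14 h.symm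
  have m25 : ¬G.Adj x2 x5 := n25
  have m52 : ¬G.Adj x5 x2 := fun h => n25 h.symm
  have m35 : ¬G.Adj x3 x5 := n35
  have m53 : ¬G.Adj x5 x3 := fun h => n35 h.symm
  have q01 : x0 ≠ x1 := e01.ne
  have q10 : x1 ≠ x0 := e01.ne'
  have q05 : x0 ≠ x5 := e05.ne
  have q50 : x5 ≠ x0 := e05.ne'
  have q12 : x1 ≠ x2 := e12.ne
  have q21 : x2 ≠ x1 := e12.ne'
  have q15 : x1 ≠ x5 := e15.ne
  have q51 : x5 ≠ x1 := e15.ne'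
  have q23 : x2 ≠ x3 := e23.ne
  have q32 : x3 ≠ x2 := e23.ne'
  have q24 : x2 ≠ x4 := e24.ne
  have q42 : x4 ≠ x2 := e24.ne'
  have q34 : x3 ≠ x4 := e34.ne
  have q43 : x4 ≠ x3 := e34.ne'
  have q45 : x4 ≠ x5 := e45.ne
  have q54 : x5 ≠ x4 := e45.ne'
  have q02 : x0 ≠ x2 := d02
  have q20 : x2 ≠ x0 := d02.symm
  have q03 : x0 ≠ x3 := d03
  have q30 : x3 ≠ x0 := d03.symm
  have q04 : x0 ≠ x4 := d04
  have q40 : x4 ≠ x0 := d04.symm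
  have q13 : x1 ≠ x3 := d13
  have q31 : x3 ≠ x1 := d13.symm
  have q14 : x1 ≠ x4 := d14
  have q41 : x4 ≠ x1 := d14.symm
  have q25 : x2 ≠ x5 := d25
  have q52 : x5 ≠ x2 := d25.symm
  have q35 : x3 ≠ x5 := d35
  have q53 : x5 ≠ x3 := d35.symm
  let f : Fin 6 → V := fun i => match i with
    | ⟨0, _⟩ => x0
    | ⟨1, _⟩ => x1
    | ⟨2, _⟩ => x2
    | ⟨3, _⟩ => x3
    | ⟨4, _⟩ => x4
    | ⟨5, _⟩ => x5
  refine hfree.elim ⟨⟨f, ?_⟩, @fun a b => ?_⟩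
  · intro a b hab
    match a, b with
    | ⟨0, _⟩, ⟨0, _⟩ => rfl
    | ⟨0, _⟩, ⟨1, _⟩ => exact absurd hab q01
    | ⟨0, _⟩, ⟨2, _⟩ => exact absurd hab q02
    | ⟨0, _⟩, ⟨3, _⟩ => exact absurd hab q03
    | ⟨0, _⟩, ⟨4, _⟩ => exact absurd hab q04
    | ⟨0, _⟩, ⟨5, _⟩ => exact absurd hab q05
    | ⟨1, _⟩, ⟨0, _⟩ => exact absurd hab q10
    | ⟨1, _⟩, ⟨1, _⟩ => rfl
    | ⟨1, _⟩, ⟨2, _⟩ => exact absurd hab q12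
    | ⟨1, _⟩, ⟨3, _⟩ => exact absurd hab q13
    | ⟨1, _⟩, ⟨4, _⟩ => exact absurd hab q14
    | ⟨1, _⟩, ⟨5, _⟩ => exact absurd hab q15
    | ⟨2, _⟩, ⟨0, _⟩ => exact absurd hab q20
    | ⟨2, _⟩, ⟨1, _⟩ => exact absurd hab q21
    | ⟨2, _⟩, ⟨2, _⟩ => rfl
    | ⟨2, _⟩, ⟨3, _⟩ => exact absurd hab q23
    | ⟨2, _⟩, ⟨4, _⟩ => exact absurd hab q24
    | ⟨2, _⟩, ⟨5, _⟩ => exact absurd hab q25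
    | ⟨3, _⟩, ⟨0, _⟩ => exact absurd hab q30
    | ⟨3, _⟩, ⟨1, _⟩ => exact absurd hab q31
    | ⟨3, _⟩, ⟨2, _⟩ => exact absurd hab q32
    | ⟨3, _⟩, ⟨3, _⟩ => rfl
    | ⟨3, _⟩, ⟨4, _⟩ => exact absurd hab q34
    | ⟨3, _⟩, ⟨5, _⟩ => exact absurd hab q35
    | ⟨4, _⟩, ⟨0, _⟩ => exact absurd hab q40
    | ⟨4, _⟩, ⟨1, _⟩ => exact absurd hab q41
    | ⟨4, _⟩, ⟨2, _⟩ => exact absurd hab q42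
    | ⟨4, _⟩, ⟨3, _⟩ => exact absurd hab q43
    | ⟨4, _⟩, ⟨4, _⟩ => rfl
    | ⟨4, _⟩, ⟨5, _⟩ => exact absurd hab q45
    | ⟨5, _⟩, ⟨0, _⟩ => exact absurd hab q50
    | ⟨5, _⟩, ⟨1, _⟩ => exact absurd hab q51
    | ⟨5, _⟩, ⟨2, _⟩ => exact absurd hab q52
    | ⟨5, _⟩, ⟨3, _⟩ => exact absurd hab q53
    | ⟨5, _⟩, ⟨4, _⟩ => exact absurd hab q54
    | ⟨5, _⟩, ⟨5, _⟩ => rfl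
  · match a, b with
    | ⟨0, _⟩, ⟨0, _⟩ => exact iff_of_false (G.loopless.irrefl x0) (by rw [H2_adj_dec]; decide : ¬H2.Adj (0:Fin 6) (0:Fin 6))
    | ⟨0, _⟩, ⟨1, _⟩ => exact iff_of_true a01 (by rw [H2_adj_dec]; decide : H2.Adj (0:Fin 6) (1:Fin 6))
    | ⟨0, _⟩, ⟨2, _⟩ => exact iff_of_false m02 (by rw [H2_adj_dec]; decide : ¬H2.Adj (0:Fin 6) (2:Fin 6))
    | ⟨0, _⟩, ⟨3, _⟩ => exact iff_of_false m03 (by rw [H2_adj_dec]; decide : ¬H2.Adj (0:Fin 6) (3:Fin 6))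
    | ⟨0, _⟩, ⟨4, _⟩ => exact iff_of_false m04 (by rw [H2_adj_dec]; decide : ¬H2.Adj (0:Fin 6) (4:Fin 6))
    | ⟨0, _⟩, ⟨5, _⟩ => exact iff_of_true a05 (by rw [H2_adj_dec]; decide : H2.Adj (0:Fin 6) (5:Fin 6))
    | ⟨1, _⟩, ⟨0, _⟩ => exact iff_of_true a10 (by rw [H2_adj_dec]; decide : H2.Adj (1:Fin 6) (0:Fin 6))
    | ⟨1, _⟩, ⟨1, _⟩ => exact iff_of_false (G.loopless.irrefl x1) (by rw [H2_adj_dec]; decide : ¬H2.Adj (1:Fin 6) (1:Fin 6))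
    | ⟨1, _⟩, ⟨2, _⟩ => exact iff_of_true a12 (by rw [H2_adj_dec]; decide : H2.Adj (1:Fin 6) (2:Fin 6))
    | ⟨1, _⟩, ⟨3, _⟩ => exact iff_of_false m13 (by rw [H2_adj_dec]; decide : ¬H2.Adj (1:Fin 6) (3:Fin 6))
    | ⟨1, _⟩, ⟨4, _⟩ => exact iff_of_false m14 (by rw [H2_adj_dec]; decide : ¬H2.Adj (1:Fin 6) (4:Fin 6))
    | ⟨1, _⟩, ⟨5, _⟩ => exact iff_of_true a15 (by rw [H2_adj_dec]; decide : H2.Adj (1:Fin 6) (5:Fin 6))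
    | ⟨2, _⟩, ⟨0, _⟩ => exact iff_of_false m20 (by rw [H2_adj_dec]; decide : ¬H2.Adj (2:Fin 6) (0:Fin 6))
    | ⟨2, _⟩, ⟨1, _⟩ => exact iff_of_true a21 (by rw [H2_adj_dec]; decide : H2.Adj (2:Fin 6) (1:Fin 6))
    | ⟨2, _⟩, ⟨2, _⟩ => exact iff_of_false (G.loopless.irrefl x2) (by rw [H2_adj_dec]; decide : ¬H2.Adj (2:Fin 6) (2:Fin 6))
    | ⟨2, _⟩, ⟨3, _⟩ => exact iff_of_true a23 (by rw [H2_adj_dec]; decide : H2.Adj (2:Fin 6) (3:Fin 6))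
    | ⟨2, _⟩, ⟨4, _⟩ => exact iff_of_true a24 (by rw [H2_adj_dec]; decide : H2.Adj (2:Fin 6) (4:Fin 6))
    | ⟨2, _⟩, ⟨5, _⟩ => exact iff_of_false m25 (by rw [H2_adj_dec]; decide : ¬H2.Adj (2:Fin 6) (5:Fin 6))
    | ⟨3, _⟩, ⟨0, _⟩ => exact iff_of_false m30 (by rw [H2_adj_dec]; decide : ¬H2.Adj (3:Fin 6) (0:Fin 6))
    | ⟨3, _⟩, ⟨1, _⟩ => exact iff_of_false m31 (by rw [H2_adj_dec]; decide : ¬H2.Adj (3:Fin 6) (1:Fin 6))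
    | ⟨3, _⟩, ⟨2, _⟩ => exact iff_of_true a32 (by rw [H2_adj_dec]; decide : H2.Adj (3:Fin 6) (2:Fin 6))
    | ⟨3, _⟩, ⟨3, _⟩ => exact iff_of_false (G.loopless.irrefl x3) (by rw [H2_adj_dec]; decide : ¬H2.Adj (3:Fin 6) (3:Fin 6))
    | ⟨3, _⟩, ⟨4, _⟩ => exact iff_of_true a34 (by rw [H2_adj_dec]; decide : H2.Adj (3:Fin 6) (4:Fin 6))
    | ⟨3, _⟩, ⟨5, _⟩ => exact iff_of_false m35 (by rw [H2_adj_dec]; decide : ¬H2.Adj (3:Fin 6) (5:Fin 6))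
    | ⟨4, _⟩, ⟨0, _⟩ => exact iff_of_false m40 (by rw [H2_adj_dec]; decide : ¬H2.Adj (4:Fin 6) (0:Fin 6))
    | ⟨4, _⟩, ⟨1, _⟩ => exact iff_of_false m41 (by rw [H2_adj_dec]; decide : ¬H2.Adj (4:Fin 6) (1:Fin 6))
    | ⟨4, _⟩, ⟨2, _⟩ => exact iff_of_true a42 (by rw [H2_adj_dec]; decide : H2.Adj (4:Fin 6) (2:Fin 6))
    | ⟨4, _⟩, ⟨3, _⟩ => exact iff_of_true a43 (by rw [H2_adj_dec]; decide : H2.Adj (4:Fin 6) (3:Fin 6))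
    | ⟨4, _⟩, ⟨4, _⟩ => exact iff_of_false (G.loopless.irrefl x4) (by rw [H2_adj_dec]; decide : ¬H2.Adj (4:Fin 6) (4:Fin 6))
    | ⟨4, _⟩, ⟨5, _⟩ => exact iff_of_true a45 (by rw [H2_adj_dec]; decide : H2.Adj (4:Fin 6) (5:Fin 6))
    | ⟨5, _⟩, ⟨0, _⟩ => exact iff_of_true a50 (by rw [H2_adj_dec]; decide : H2.Adj (5:Fin 6) (0:Fin 6))
    | ⟨5, _⟩, ⟨1, _⟩ => exact iff_of_true a51 (by rw [H2_adj_dec]; decide : H2.Adj (5:Fin 6) (1:Fin 6))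
    | ⟨5, _⟩, ⟨2, _⟩ => exact iff_of_false m52 (by rw [H2_adj_dec]; decide : ¬H2.Adj (5:Fin 6) (2:Fin 6))
    | ⟨5, _⟩, ⟨3, _⟩ => exact iff_of_false m53 (by rw [H2_adj_dec]; decide : ¬H2.Adj (5:Fin 6) (3:Fin 6))
    | ⟨5, _⟩, ⟨4, _⟩ => exact iff_of_true a54 (by rw [H2_adj_dec]; decide : H2.Adj (5:Fin 6) (4:Fin 6))
    | ⟨5, _⟩, ⟨5, _⟩ => exact iff_of_false (G.loopless.irrefl x5) (by rw [H2_adj_dec]; decide : ¬H2.Adj (5:Fin 6) (5:Fin 6))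


section Fin
variable [Fintype V]

lemma exists_minDomSet (G : SimpleGraph V) : ∃ D : Set V, IsMinDomSet G D := by
  have hne : {n | ∃ S : Set V, IsDomSet G S ∧ S.ncard = n}.Nonempty :=
    ⟨(Set.univ : Set V).ncard, Set.univ, fun v hv => absurd (Set.mem_univ v) hv, rfl⟩
  obtain ⟨S, hS, hcard⟩ := Nat.sInf_mem hne
  exact ⟨S, hS, hcard⟩

lemma totalDomNum_le {T : Set V} (hT : IsTotalDomSet G T) : totalDomNum G ≤ T.ncard :=
  Nat.sInf_le ⟨T, hT, rfl⟩

/-- packing: the closed neighbourhoods of members of a γ-set are pairwise disjoint. -/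
lemma pack (hiso : NoIsolated G) (hh : totalDomNum G = 2 * domNum G)
    {D : Set V} (hD : IsMinDomSet G D) : ∀ v ∈ D, ∀ w ∈ D, v ≠ w → Disjoint (cnbr G v) (cnbr G w) := by
  intro v hv w hw hvw
  by_contra hdis
  obtain ⟨p, hpv, hpw⟩ := Set.not_disjoint_iff.1 hdis
  choose f hf using hiso
  have hγ2 : 2 ≤ domNum G := by
    rw [← hD.2]
    have : ({v, w} : Set V) ⊆ D := by
      rintro x (rfl | rfl); exact hv; exact hw
    calc 2 = ({v, w} : Set V).ncard := (Set.ncard_pair hvw).symm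
    _ ≤ D.ncard := Set.ncard_le_ncard this (Set.toFinite D)
  have hdiff : (D \ {v, w}).ncard = D.ncard - 2 := by
    rw [Set.ncard_diff (by rintro x (rfl | rfl); exact hv; exact hw) (Set.toFinite _),
      Set.ncard_pair hvw]
  -- the extra vertex used to dominate both v and w
  by_cases hadj : G.Adj v w
  · set T : Set V := D ∪ (f '' (D \ {v, w})) with hT
    have htot : IsTotalDomSet G T := by
      intro y
      by_cases hy : y ∈ D
      · by_cases hyv : y = v
        · subst hyv; exact ⟨w, Or.inl hw, hadj.symm⟩
        · by_cases hyw : y = w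
          · subst hyw; exact ⟨v, Or.inl hv, hadj⟩
          · exact ⟨f y, Or.inr ⟨y, ⟨hy, by simp [hyv, hyw]⟩, rfl⟩, (hf y).symm⟩
      · obtain ⟨u, hu, hadj'⟩ := hD.1 y hy
        exact ⟨u, Or.inl hu, hadj'⟩
    have hcard : T.ncard ≤ 2 * domNum G - 2 := by
      have h1 : (f '' (D \ {v, w})).ncard ≤ (D \ {v, w}).ncard :=
        Set.ncard_image_le (Set.toFinite (D \ {v, w}))
      have h2 : T.ncard ≤ D.ncard + (f '' (D \ {v, w})).ncard := Set.ncard_union_le _ _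
      have h3 := hD.2
      omega
    have := totalDomNum_le htot
    omega
  · have hpv' : p ≠ v := by
      rintro rfl
      rcases mem_cnbr.1 hpw with rfl | hA
      · exact hvw rfl
      · exact hadj hA.symm
    have hpw' : p ≠ w := by
      rintro rfl
      rcases mem_cnbr.1 hpv with rfl | hA
      · exact hvw rfl
      · exact hadj hA
    have hadjvp : G.Adj v p := adj_of_mem_cnbr hpv hpv'
    have hadjwp : G.Adj w p := adj_of_mem_cnbr hpw hpw'
    set T : Set V := (D ∪ {p}) ∪ (f '' (D \ {v, w})) with hT
    have htot : IsTotalDomSet G T := by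
      intro y
      by_cases hy : y ∈ D
      · by_cases hyv : y = v
        · subst hyv; exact ⟨p, Or.inl (Or.inr rfl), hadjvp.symm⟩
        · by_cases hyw : y = w
          · subst hyw; exact ⟨p, Or.inl (Or.inr rfl), hadjwp.symm⟩
          · exact ⟨f y, Or.inr ⟨y, ⟨hy, by simp [hyv, hyw]⟩, rfl⟩, (hf y).symm⟩
      · obtain ⟨u, hu, hadj'⟩ := hD.1 y hy
        exact ⟨u, Or.inl (Or.inl hu), hadj'⟩
    have hcard : T.ncard ≤ 2 * domNum G - 1 := by
      have h1 : (f '' (D \ {v, w})).ncard ≤ (D \ {v, w}).ncard :=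
        Set.ncard_image_le (Set.toFinite (D \ {v, w}))
      have h2 : T.ncard ≤ (D ∪ {p}).ncard + (f '' (D \ {v, w})).ncard := Set.ncard_union_le _ _
      have h4 : (D ∪ {p}).ncard ≤ D.ncard + ({p} : Set V).ncard := Set.ncard_union_le _ _
      have h5 : ({p} : Set V).ncard = 1 := Set.ncard_singleton p
      have h3 := hD.2
      omega
    have := totalDomNum_le htot
    omega

/-- every vertex lies in the closed neighbourhood of some member of a dominating set -/
lemma exists_block {D : Set V} (hD : IsDomSet G D) (z : V) : ∃ v ∈ D, z ∈ cnbr G v := by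
  by_cases hz : z ∈ D
  · exact ⟨z, hz, self_mem_cnbr z⟩
  · obtain ⟨u, hu, hadj⟩ := hD z hz
    exact ⟨u, hu, adj_mem_cnbr hadj⟩

/-- if `z` is in the block of `v ∈ D` and `z` is special then `z` is a true twin of `v`. -/
lemma special_twin_center (hiso : NoIsolated G) (hh : totalDomNum G = 2 * domNum G)
    {D : Set V} (hD : IsMinDomSet G D) {v z : V} (hv : v ∈ D) (hz : z ∈ cnbr G v)
    (hsp : Special G z) : cnbr G z = cnbr G v := by
  have hpack := pack hiso hh hD
  by_cases hcase : ∃ y, y ∈ cnbr G v ∧ y ∉ cnbr G z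
  · -- then v witnesses that z is not special
    exfalso
    obtain ⟨y, hyv, hyz⟩ := hcase
    have hzv : z ≠ v := by
      rintro rfl; exact hyz hyv
    have hadjvz : G.Adj v z := adj_of_mem_cnbr hz hzv
    have hvz : v ∈ cnbr G z := mem_cnbr_comm.1 hz
    have hyv' : y ≠ v := by rintro rfl; exact hyz hvz
    refine hsp.2 ⟨v, ⟨hadjvz.symm, y, adj_of_mem_cnbr hyv hyv', hyz⟩, ?_⟩
    -- Dset z ⊆ N(v)
    intro u hu
    obtain ⟨hadjzu, hne, hsub⟩ := hu
    obtain ⟨c, hc, huc⟩ := exists_block hD.1 u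
    have hucnbrz : u ∈ cnbr G z := adj_mem_cnbr hadjzu
    by_cases hcv : c = v
    · have huv : u ≠ v := fun h => hyz (hsub (by rw [h]; exact hyv))
      have huc2 : u ∈ cnbr G v := by rw [← hcv]; exact huc
      exact adj_of_mem_cnbr huc2 huv
    · exfalso
      have huc' : u ≠ c := by
        intro hh
        have : z ∈ cnbr G c := hh ▸ (mem_cnbr_comm.1 hucnbrz)
        exact Set.disjoint_left.1 (hpack c hc v hv hcv) this hz
      have hadjcu : G.Adj c u := adj_of_mem_cnbr huc huc'
      have hcu : c ∈ cnbr G u := mem_cnbr_comm.1 huc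
      have hcz : c ∈ cnbr G z := hsub hcu
      rcases mem_cnbr.1 hcz with hceq | hadjzc
      · exact Set.disjoint_left.1 (hpack c hc v hv hcv) (hceq ▸ self_mem_cnbr c) hz
      · have : z ∈ cnbr G c := mem_cnbr_comm.1 (adj_mem_cnbr hadjzc)
        exact Set.disjoint_left.1 (hpack c hc v hv hcv) this hz
  · push_neg at hcase
    -- cnbr v ⊆ cnbr z
    by_cases hcase2 : ∃ x, x ∈ cnbr G z ∧ x ∉ cnbr G v
    · -- h-contradiction
      exfalso
      obtain ⟨x, hxz, hxv⟩ := hcase2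
      have hzx : z ≠ x := by rintro rfl; exact hxv hz
      have hadjzx : G.Adj z x := adj_of_mem_cnbr hxz (fun hh => hzx hh.symm)
      obtain ⟨w, hw, hxw⟩ := exists_block hD.1 x
      have hwv : w ≠ v := by rintro rfl; exact hxv hxw
      have hxw' : x ≠ w := by
        intro heq
        have : z ∈ cnbr G w := heq ▸ (adj_mem_cnbr hadjzx.symm)
        exact Set.disjoint_left.1 (pack hiso hh hD w hw v hv hwv) this hz
      choose f0 hf0 using hiso
      classical
      set f : V → V := fun c => if c = w then x else f0 c with hf
      set T : Set V := (D \ {v}) ∪ {z} ∪ (f '' (D \ {v})) with hT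
      have htot : IsTotalDomSet G T := by
        intro y
        obtain ⟨c, hc, hyc⟩ := exists_block hD.1 y
        by_cases hcv : c = v
        · subst hcv
          by_cases hyz2 : y = z
          · subst hyz2
            refine ⟨x, Or.inr ⟨w, ⟨hw, by simp [hwv]⟩, by simp [hf]⟩, hadjzx.symm⟩
          · have : y ∈ cnbr G z := hcase y hyc
            exact ⟨z, Or.inl (Or.inr rfl), adj_of_mem_cnbr this hyz2⟩
        · by_cases hyc2 : y = c
          · subst hyc2
            refine ⟨f y, Or.inr ⟨y, ⟨hc, by simp [hcv]⟩, rfl⟩, ?_⟩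
            by_cases hyw : y = w
            · subst hyw; simpa [hf] using (adj_of_mem_cnbr hxw hxw').symm
            · simpa [hf, hyw] using (hf0 y).symm
          · exact ⟨c, Or.inl (Or.inl ⟨hc, by simp [hcv]⟩), adj_of_mem_cnbr hyc hyc2⟩
      have hγ1 : 1 ≤ domNum G := by
        rw [← hD.2]
        have : 0 < D.ncard := (Set.ncard_pos (Set.toFinite D)).2 ⟨v, hv⟩
        omega
      have hdiff : (D \ {v}).ncard = D.ncard - 1 := by
        rw [Set.ncard_diff (by rintro a rfl; exact hv) (Set.toFinite _), Set.ncard_singleton]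
      have h1 : (f '' (D \ {v})).ncard ≤ (D \ {v}).ncard := Set.ncard_image_le (Set.toFinite _)
      have h2 : T.ncard ≤ ((D \ {v}) ∪ {z}).ncard + (f '' (D \ {v})).ncard := Set.ncard_union_le _ _
      have h4 : ((D \ {v}) ∪ {z}).ncard ≤ (D \ {v}).ncard + ({z} : Set V).ncard := Set.ncard_union_le _ _
      have h5 : ({z} : Set V).ncard = 1 := Set.ncard_singleton z
      have h6 := totalDomNum_le htot
      have h3 := hD.2
      omega
    · push_neg at hcase2
      exact Set.Subset.antisymm (fun x hx => hcase2 x hx) (fun y hy => hcase y hy)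

/-- any dominating set has a member whose closed neighbourhood contains a given vertex -/
lemma exists_dblock {S : Set V} (hS : IsDomSet G S) (w : V) : ∃ u ∈ S, w ∈ cnbr G u := by
  by_cases hw : w ∈ S
  · exact ⟨w, hw, self_mem_cnbr w⟩
  · obtain ⟨u, hu, hadj⟩ := hS w hw
    exact ⟨u, hu, adj_mem_cnbr hadj⟩

/-- the twin lemma: a member of one γ-set paired with a member of another γ-set in its
block must be a true twin. Uses only C6-freeness. -/
lemma twin_lemma (hiso : NoIsolated G) (hh : totalDomNum G = 2 * domNum G)
    (hC6 : Free (cycleGraph 6) G) {D D' : Set V}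
    (hD : IsMinDomSet G D) (hD' : IsMinDomSet G D') :
    ∀ v ∈ D, ∀ u ∈ D', u ∈ cnbr G v → cnbr G u = cnbr G v := by
  have hpackD := pack hiso hh hD
  have hpackD' := pack hiso hh hD'
  have huniq : ∀ v ∈ D, ∀ u1 ∈ D', ∀ u2 ∈ D', u1 ∈ cnbr G v → u2 ∈ cnbr G v → u1 = u2 := by
    intro v hv u1 hu1 u2 hu2 h1 h2
    by_contra hne
    exact Set.disjoint_left.1 (hpackD' u1 hu1 u2 hu2 hne) (mem_cnbr_comm.1 h1) (mem_cnbr_comm.1 h2)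
  have huniqD : ∀ u, ∀ v1 ∈ D, ∀ v2 ∈ D, u ∈ cnbr G v1 → u ∈ cnbr G v2 → v1 = v2 := by
    intro u v1 hv1 v2 hv2 h1 h2
    by_contra hne
    exact Set.disjoint_left.1 (hpackD v1 hv1 v2 hv2 hne) h1 h2
  -- main claim : no defective block
  have hsub : ∀ v ∈ D, ∀ u ∈ D', u ∈ cnbr G v → cnbr G v ⊆ cnbr G u := by
    intro c1 hc1 u1 hu1 hu1c1
    by_contra hnot
    obtain ⟨x2, hx2c1, hx2u1⟩ := Set.not_subset.1 hnot
    have hx2D' : x2 ∉ D' := by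
      intro hx2
      have heq := huniq c1 hc1 u1 hu1 x2 hx2 hu1c1 hx2c1
      exact hx2u1 (by rw [heq]; exact self_mem_cnbr x2)
    obtain ⟨u2, hu2, hadju2x2⟩ := hD'.1 x2 hx2D'
    obtain ⟨c2, hc2, hu2c2⟩ := exists_block hD.1 u2
    have hu2ne : u2 ≠ u1 := by
      intro heq
      exact hx2u1 (heq ▸ adj_mem_cnbr hadju2x2)
    have hc2c1 : c2 ≠ c1 := by
      intro heq
      exact hu2ne (huniq c1 hc1 u2 hu2 u1 hu1 (heq ▸ hu2c2) hu1c1)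
    have hdisj12 : Disjoint (cnbr G c1) (cnbr G c2) := hpackD c1 hc1 c2 hc2 hc2c1.symm
    -- basic derived facts
    have hu1ne_c1 : u1 ≠ c1 := by
      intro heq
      exact hx2u1 (heq ▸ hx2c1)
    have hadjc1u1 : G.Adj c1 u1 := adj_of_mem_cnbr hu1c1 hu1ne_c1
    have hx2ne_c1 : x2 ≠ c1 := by
      intro heq
      exact hx2u1 (heq ▸ mem_cnbr_comm.1 hu1c1)
    have hadjc1x2 : G.Adj c1 x2 := adj_of_mem_cnbr hx2c1 hx2ne_c1
    have hx2memu2 : x2 ∈ cnbr G u2 := adj_mem_cnbr hadju2x2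
    have hu2ne_c2 : u2 ≠ c2 := by
      intro heq
      apply Set.disjoint_left.1 hdisj12 hx2c1
      rw [← heq]; exact hx2memu2
    have hadjc2u2 : G.Adj c2 u2 := adj_of_mem_cnbr hu2c2 hu2ne_c2
    have hc2memu2 : c2 ∈ cnbr G u2 := mem_cnbr_comm.1 hu2c2
    -- choice of D'-representatives and fallback neighbours
    choose f0 hf0 using hiso
    have huof' : ∀ σ : V, ∃ uu : V, σ ∈ D → (uu ∈ D' ∧ uu ∈ cnbr G σ) := by
      intro σ
      by_cases hσ : σ ∈ D
      · obtain ⟨uu, h1, h2⟩ := exists_dblock hD'.1 σ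
        exact ⟨uu, fun _ => ⟨h1, mem_cnbr_comm.1 h2⟩⟩
      · exact ⟨σ, fun hin => absurd hin hσ⟩
    choose uof huof using huof'
    classical
    set f : V → V := fun σ => if uof σ = σ then f0 σ else uof σ with hfdef
    have hadjf : ∀ σ ∈ D, G.Adj σ (f σ) := by
      intro σ hσ
      by_cases hcase : uof σ = σ
      · simpa [hfdef, hcase] using hf0 σ
      · have := (huof σ hσ).2
        simpa [hfdef, hcase] using adj_of_mem_cnbr this hcase
    set T : Set V := ((D \ {c2}) ∪ {u2, x2}) ∪ (f '' (D \ {c1, c2})) with hT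
    have htot : IsTotalDomSet G T := by
      intro y
      obtain ⟨cy, hcy, hycy⟩ := exists_block hD.1 y
      by_cases hcyc2 : cy = c2
      · -- y is in the block of c2
        have hyc2 : y ∈ cnbr G c2 := hcyc2 ▸ hycy
        by_cases hyu2 : y ∈ cnbr G u2
        · by_cases hyu2eq : y = u2
          · exact ⟨x2, Or.inl (Or.inr (Or.inr rfl)), hyu2eq ▸ hadju2x2.symm⟩
          · exact ⟨u2, Or.inl (Or.inr (Or.inl rfl)), adj_of_mem_cnbr hyu2 hyu2eq⟩
        · -- y is an import of the block of c2
          have hyD' : y ∉ D' := by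
            intro hy
            have : y = u2 := huniq c2 hc2 y hy u2 hu2 hyc2 hu2c2
            exact hyu2 (this ▸ self_mem_cnbr y)
          obtain ⟨uσ, huσ, hadjuσy⟩ := hD'.1 y hyD'
          obtain ⟨σ, hσ, huσσ⟩ := exists_block hD.1 uσ
          have huσu2 : uσ ≠ u2 := by
            intro heq
            exact hyu2 (heq ▸ adj_mem_cnbr hadjuσy)
          have hσc2 : σ ≠ c2 := by
            intro heq
            exact huσu2 (huniq c2 hc2 uσ huσ u2 hu2 (heq ▸ huσσ) hu2c2)
          by_cases hσc1 : σ = c1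
          · -- the C6 case : y must be adjacent to x2
            have huσu1 : uσ = u1 := huniq c1 hc1 uσ huσ u1 hu1 (hσc1 ▸ huσσ) hu1c1
            have hadju1y : G.Adj u1 y := huσu1 ▸ hadjuσy
            by_cases hx2y : G.Adj x2 y
            · exact ⟨x2, Or.inl (Or.inr (Or.inr rfl)), hx2y⟩
            · exfalso
              have hyne_c2 : y ≠ c2 := by
                intro heq
                exact hyu2 (heq ▸ hc2memu2)
              have hadjc2y : G.Adj c2 y := adj_of_mem_cnbr hyc2 hyne_c2
              have hu1memc1 : u1 ∈ cnbr G c1 := hu1c1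
              -- disjointness of the two D'-blocks of u1 and u2
              have hdisj' : Disjoint (cnbr G u1) (cnbr G u2) := hpackD' u1 hu1 u2 hu2 hu2ne.symm
              have hymemu1 : y ∈ cnbr G u1 := adj_mem_cnbr hadju1y
              refine embed_C6 hC6 c1 x2 u2 c2 y u1 hadjc1x2 hadjc1u1 hadju2x2.symm
                hadjc2u2.symm hadjc2y (hadju1y.symm) ?_ ?_ ?_ ?_ ?_ ?_ ?_ ?_ ?_ ?_ ?_ ?_ ?_ ?_ ?_ ?_ ?_ ?_
              · intro hadj
                exact Set.disjoint_left.1 hdisj12 (adj_mem_cnbr hadj) hu2c2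
              · intro hadj
                exact Set.disjoint_left.1 hdisj12 (adj_mem_cnbr hadj) (self_mem_cnbr c2)
              · intro hadj
                exact Set.disjoint_left.1 hdisj12 (adj_mem_cnbr hadj) hyc2
              · intro hadj
                exact Set.disjoint_left.1 hdisj12 hx2c1 (adj_mem_cnbr hadj.symm)
              · exact hx2y
              · intro hadj
                exact hx2u1 (adj_mem_cnbr hadj.symm)
              · intro hadj
                exact hyu2 (adj_mem_cnbr hadj)
              · intro hadj
                exact Set.disjoint_left.1 hdisj' (self_mem_cnbr u1) (adj_mem_cnbr hadj)
              · intro hadj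
                exact Set.disjoint_left.1 hdisj12 hu1c1 (adj_mem_cnbr hadj)
              · intro heq
                exact Set.disjoint_left.1 hdisj12 (self_mem_cnbr c1) (by rw [heq]; exact hu2c2)
              · exact fun heq => hc2c1 heq.symm
              · intro heq
                exact Set.disjoint_left.1 hdisj12 (self_mem_cnbr c1) (by rw [heq]; exact hyc2)
              · intro heq
                exact Set.disjoint_left.1 hdisj12 hx2c1 (by rw [heq]; exact self_mem_cnbr c2)
              · intro heq
                exact hyu2 (by rw [← heq]; exact hx2memu2)
              · intro heq
                exact hx2u1 (by rw [heq]; exact self_mem_cnbr u1)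
              · intro heq
                exact hyu2 (by rw [← heq]; exact self_mem_cnbr u2)
              · exact hu2ne
              · intro heq
                exact Set.disjoint_left.1 hdisj12 hu1c1 (by rw [← heq]; exact self_mem_cnbr c2)
          · -- served by f σ = uσ
            have huofσ : uof σ = uσ := huniq σ hσ (uof σ) (huof σ hσ).1 uσ huσ (huof σ hσ).2 huσσ
            have huσσne : uof σ ≠ σ := by
              rw [huofσ]
              intro heq
              apply Set.disjoint_left.1 (hpackD σ hσ c2 hc2 hσc2) _ hyc2
              rw [← heq]
              exact adj_mem_cnbr hadjuσy
            refine ⟨f σ, Or.inr ⟨σ, ⟨hσ, by simp [hσc1, hσc2]⟩, rfl⟩, ?_⟩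
            have hfs : f σ = uσ := by
              show (if uof σ = σ then f0 σ else uof σ) = uσ
              rw [if_neg huσσne, huofσ]
            rw [hfs]
            exact hadjuσy
      · by_cases hyeq : y = cy
        · by_cases hcyc1 : cy = c1
          · exact ⟨x2, Or.inl (Or.inr (Or.inr rfl)), by rw [hyeq, hcyc1]; exact hadjc1x2.symm⟩
          · refine ⟨f cy, Or.inr ⟨cy, ⟨hcy, by simp [hcyc1, hcyc2]⟩, rfl⟩, ?_⟩
            rw [hyeq]
            exact (hadjf cy hcy).symm
        · exact ⟨cy, Or.inl (Or.inl ⟨hcy, by simp [hcyc2]⟩), adj_of_mem_cnbr hycy hyeq⟩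
    -- counting
    have hγ2 : 2 ≤ domNum G := by
      rw [← hD.2]
      have hsubpair : ({c1, c2} : Set V) ⊆ D := by
        rintro a (rfl | rfl)
        exacts [hc1, hc2]
      calc 2 = ({c1, c2} : Set V).ncard := (Set.ncard_pair (fun h => hc2c1 h.symm)).symm
      _ ≤ D.ncard := Set.ncard_le_ncard hsubpair (Set.toFinite D)
    have hd1 : (D \ {c2}).ncard = D.ncard - 1 := by
      rw [Set.ncard_diff (by rintro a rfl; exact hc2) (Set.toFinite _), Set.ncard_singleton]
    have hd2 : (D \ {c1, c2}).ncard = D.ncard - 2 := by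
      rw [Set.ncard_diff (by rintro a (rfl | rfl); exacts [hc1, hc2]) (Set.toFinite _),
        Set.ncard_pair (fun h => hc2c1 h.symm)]
    have h1 : T.ncard ≤ ((D \ {c2}) ∪ {u2, x2}).ncard + (f '' (D \ {c1, c2})).ncard :=
      Set.ncard_union_le _ _
    have h2 : ((D \ {c2}) ∪ {u2, x2}).ncard ≤ (D \ {c2}).ncard + ({u2, x2} : Set V).ncard :=
      Set.ncard_union_le _ _
    have h3 : ({u2, x2} : Set V).ncard ≤ 2 := by
      calc ({u2, x2} : Set V).ncard ≤ ({x2} : Set V).ncard + 1 :=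
        Set.ncard_insert_le u2 {x2}
      _ = 2 := by rw [Set.ncard_singleton]
    have h4 : (f '' (D \ {c1, c2})).ncard ≤ (D \ {c1, c2}).ncard :=
      Set.ncard_image_le (Set.toFinite _)
    have h5 := totalDomNum_le htot
    have h6 := hD.2
    omega
  -- now conclude equality
  intro v hv u hu huv
  refine Set.Subset.antisymm ?_ (hsub v hv u hu huv)
  intro y hyu
  by_contra hyv
  obtain ⟨w, hw, hyw⟩ := exists_block hD.1 y
  have hwv : w ≠ v := by
    intro heq
    exact hyv (heq ▸ hyw)
  obtain ⟨uw, huw, hwuw⟩ := exists_dblock hD'.1 w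
  have huww : uw ∈ cnbr G w := mem_cnbr_comm.1 hwuw
  have hyuw : y ∈ cnbr G uw := hsub w hw uw huw huww hyw
  have huwne : uw ≠ u := by
    intro heq
    exact Set.disjoint_left.1 (hpackD v hv w hw (Ne.symm hwv)) huv (by rw [← heq]; exact huww)
  exact Set.disjoint_left.1 (hpackD' u hu uw huw huwne.symm) hyu hyuw

/-- hexagon cases wrapper: a 6-cycle whose only possible chords are `x1x5` and `x2x4`
yields an induced C6, H1 or H2. -/
lemma hex (hH1 : Free H1 G) (hH2 : Free H2 G) (hC6 : Free (cycleGraph 6) G)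
    (x0 x1 x2 x3 x4 x5 : V)
    (e01 : G.Adj x0 x1) (e12 : G.Adj x1 x2) (e23 : G.Adj x2 x3)
    (e34 : G.Adj x3 x4) (e45 : G.Adj x4 x5) (e50 : G.Adj x5 x0)
    (n02 : ¬G.Adj x0 x2) (n13 : ¬G.Adj x1 x3) (n35 : ¬G.Adj x3 x5)
    (n04 : ¬G.Adj x0 x4) (n03 : ¬G.Adj x0 x3) (n14 : ¬G.Adj x1 x4)
    (n25 : ¬G.Adj x2 x5)
    (d02 : x0 ≠ x2) (d13 : x1 ≠ x3) (d35 : x3 ≠ x5) (d04 : x0 ≠ x4)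
    (d03 : x0 ≠ x3) (d14 : x1 ≠ x4) (d25 : x2 ≠ x5) (d15 : x1 ≠ x5)
    (d24 : x2 ≠ x4) : False := by
  by_cases c15 : G.Adj x1 x5 <;> by_cases c24 : G.Adj x2 x4
  · exact embed_H2 hH2 x0 x1 x2 x3 x4 x5 e01 e50.symm e12 c15 e23 c24 e34 e45
      n02 n03 n04 n13 n14 n25 n35 d02 d03 d04 d13 d14 d25 d35
  · exact embed_H1 hH1 x1 x0 x5 x4 x3 x2 e01.symm c15 e12 e50.symm e45.symm e34.symm e23.symm
      n14 n13 n04 n03 n02 (fun hadj => n35 hadj.symm) (fun hadj => n25 hadj.symm)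
      (fun hadj => c24 hadj.symm)
      d14 d13 d04 d03 d02 d35.symm d25.symm d24.symm
  · exact embed_H1 hH1 x2 x3 x4 x5 x0 x1 e23 c24 e12.symm e34 e45 e50 e01
      n25 (fun hadj => n02 hadj.symm) n35 (fun hadj => n03 hadj.symm)
      (fun hadj => n13 hadj.symm) (fun hadj => n04 hadj.symm)
      (fun hadj => n14 hadj.symm) (fun hadj => c15 hadj.symm)
      d25 d02.symm d35 d03.symm d13.symm d04.symm d14.symm d15.symm
  · exact embed_C6 hC6 x0 x1 x2 x3 x4 x5 e01 e50.symm e12 e23 e34 e45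
      n02 n03 n04 n13 n14 c15 c24 n25 n35 d02 d03 d04 d13 d14 d15 d24 d25 d35

/-- a member of a γ-set having a nontrivial true twin is special. -/
lemma center_twin_special (hiso : NoIsolated G) (hh : totalDomNum G = 2 * domNum G)
    (hH1 : Free H1 G) (hH2 : Free H2 G) (hC6 : Free (cycleGraph 6) G)
    {D : Set V} (hD : IsMinDomSet G D) {v t : V} (hv : v ∈ D)
    (ht : cnbr G t = cnbr G v) (htv : t ≠ v) : Special G v := by
  have hpack := pack hiso hh hD
  have hadjvt : G.Adj v t := adj_of_mem_cnbr (ht ▸ self_mem_cnbr t) htv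
  by_contra hns
  rw [Special] at hns
  push_neg at hns
  obtain ⟨m, hmM, hsubm⟩ := hns ⟨t, hadjvt⟩
  obtain ⟨hadjvm, x0, hadjmx0, hx0⟩ := hmM
  have hmv : m ∈ cnbr G v := adj_mem_cnbr hadjvm
  have hmnev : m ≠ v := hadjvm.ne'
  have hmnet : m ≠ t := by
    intro heq
    apply hx0
    rw [← ht]
    exact adj_mem_cnbr (heq ▸ hadjmx0)
  choose f0 hf0 using hiso
  classical
  -- the selection of partners
  have hselect : ∀ σ : V, ∃ y : V, (σ ∈ D ∧ σ ≠ v) →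
      (G.Adj σ y ∧ ∀ μ, μ ∈ cnbr G v → μ ≠ v → μ ≠ t →
        (∃ x, G.Adj μ x ∧ x ∈ cnbr G σ) → G.Adj μ y) := by
    intro σ
    by_cases hσ : σ ∈ D ∧ σ ≠ v
    · obtain ⟨hσD, hσv⟩ := hσ
      have hdisjvσ : Disjoint (cnbr G v) (cnbr G σ) := hpack v hv σ hσD (Ne.symm hσv)
      set W : Set V := {μ | μ ∈ cnbr G v ∧ μ ≠ v ∧ μ ≠ t ∧ ∃ x, G.Adj μ x ∧ x ∈ cnbr G σ}
        with hW
      by_cases hWne : W.Nonempty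
      · set A : V → Set V := fun μ => {x | G.Adj μ x ∧ x ∈ cnbr G σ} with hA
        obtain ⟨μ0, hμ0, hmin'⟩ := (Set.toFinite W).exists_minimalFor A W hWne
        have hmin : ∀ μ ∈ W, A μ ≤ A μ0 → A μ0 = A μ := fun μ hμ hle =>
          le_antisymm (hmin' hμ hle) hle
        obtain ⟨hμ0v, hμ0nev, hμ0net, x₀, hx₀adj, hx₀σ⟩ := hμ0
        -- the chain property
        have hchain : ∀ μ ∈ W, A μ0 ⊆ A μ ∨ A μ ⊆ A μ0 := by
          intro μ hμW
          obtain ⟨hμv, hμnev, hμnet, xw, hxwadj, hxwσ⟩ := hμW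
          by_cases hμμ0 : μ = μ0
          · exact Or.inl (by rw [hμμ0])
          · by_contra hcon
            push_neg at hcon
            obtain ⟨hns1, hns2⟩ := hcon
            obtain ⟨x, hxA0, hxAμ⟩ := Set.not_subset.1 hns1
            obtain ⟨x', hx'Aμ, hx'A0⟩ := Set.not_subset.1 hns2
            obtain ⟨hadjμ0x, hxσ⟩ := hxA0
            obtain ⟨hadjμx', hx'σ⟩ := hx'Aμ
            -- hexagon (σ, x', μ, t, μ0, x)
            have hxnoσ : x ≠ σ := by
              intro heq
              exact Set.disjoint_left.1 hdisjvσ hμ0v (adj_mem_cnbr (heq ▸ hadjμ0x).symm)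
            have hx'noσ : x' ≠ σ := by
              intro heq
              exact Set.disjoint_left.1 hdisjvσ hμv (adj_mem_cnbr (heq ▸ hadjμx').symm)
            refine hex hH1 hH2 hC6 σ x' μ t μ0 x
              (adj_of_mem_cnbr hx'σ hx'noσ) hadjμx'.symm
              (adj_of_mem_cnbr (ht ▸ hμv) hμnet).symm
              (adj_of_mem_cnbr (ht ▸ hμ0v) hμ0net)
              hadjμ0x (adj_of_mem_cnbr hxσ hxnoσ).symm
              ?_ ?_ ?_ ?_ ?_ ?_ ?_ ?_ ?_ ?_ ?_ ?_ ?_ ?_ ?_ ?_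
            · intro hadj
              exact Set.disjoint_left.1 hdisjvσ hμv (adj_mem_cnbr hadj)
            · intro hadj
              exact Set.disjoint_left.1 hdisjvσ (ht ▸ adj_mem_cnbr hadj.symm) hx'σ
            · intro hadj
              exact Set.disjoint_left.1 hdisjvσ (ht ▸ adj_mem_cnbr hadj) hxσ
            · intro hadj
              exact Set.disjoint_left.1 hdisjvσ hμ0v (adj_mem_cnbr hadj)
            · intro hadj
              exact Set.disjoint_left.1 hdisjvσ (ht ▸ self_mem_cnbr t) (adj_mem_cnbr hadj)
            · intro hadj
              exact hx'A0 ⟨hadj.symm, hx'σ⟩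
            · intro hadj
              exact hxAμ ⟨hadj, hxσ⟩
            · intro heq
              exact Set.disjoint_left.1 hdisjvσ hμv (by rw [← heq]; exact self_mem_cnbr σ)
            · intro heq
              exact Set.disjoint_left.1 hdisjvσ (ht ▸ self_mem_cnbr t) (by rw [← heq]; exact hx'σ)
            · intro heq
              exact Set.disjoint_left.1 hdisjvσ (ht ▸ self_mem_cnbr t) (by rw [heq]; exact hxσ)
            · intro heq
              exact Set.disjoint_left.1 hdisjvσ hμ0v (by rw [← heq]; exact self_mem_cnbr σ)
            · intro heq
              exact Set.disjoint_left.1 hdisjvσ (ht ▸ self_mem_cnbr t) (by rw [heq]; exact self_mem_cnbr t)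
            · intro heq
              exact Set.disjoint_left.1 hdisjvσ hμ0v (by rw [← heq]; exact hx'σ)
            · intro heq
              exact Set.disjoint_left.1 hdisjvσ hμv (by rw [heq]; exact hxσ)
            · intro heq
              exact hx'A0 (by rw [heq]; exact ⟨hadjμ0x, hxσ⟩)
            · exact fun heq => hμμ0 heq
        -- x₀ works
        refine ⟨x₀, fun _ => ⟨?_, ?_⟩⟩
        · have hx₀noσ : x₀ ≠ σ := by
            intro heq
            exact Set.disjoint_left.1 hdisjvσ hμ0v (adj_mem_cnbr (heq ▸ hx₀adj).symm)
          exact adj_of_mem_cnbr hx₀σ hx₀noσ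
        · intro μ hμv hμnev hμnet hcross
          have hμW : μ ∈ W := ⟨hμv, hμnev, hμnet, hcross⟩
          rcases hchain μ hμW with hsub | hsub
          · exact (hsub ⟨hx₀adj, hx₀σ⟩).1
          · have heq : A μ0 = A μ := hmin μ hμW hsub
            have hx₀Aμ : x₀ ∈ A μ := by rw [← heq]; exact ⟨hx₀adj, hx₀σ⟩
            exact hx₀Aμ.1
      · refine ⟨f0 σ, fun _ => ⟨hf0 σ, ?_⟩⟩
        intro μ hμv hμnev hμnet hcross
        exact absurd ⟨hμv, hμnev, hμnet, hcross⟩ (fun hc => hWne ⟨μ, hc⟩)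
    · exact ⟨σ, fun hc => absurd hc hσ⟩
  choose ysel hysel using hselect
  set T : Set V := ((D \ {v}) ∪ {m}) ∪ (ysel '' (D \ {v})) with hT
  have htot : IsTotalDomSet G T := by
    intro z
    obtain ⟨cz, hcz, hzcz⟩ := exists_block hD.1 z
    by_cases hczv : cz = v
    · -- z in the block of v
      have hzv : z ∈ cnbr G v := hczv ▸ hzcz
      by_cases hzeqv : z = v
      · exact ⟨m, Or.inl (Or.inr rfl), hzeqv ▸ hadjvm.symm⟩
      · by_cases hztwin : cnbr G z = cnbr G v
        · -- twins are adjacent to m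
          have hmnez : m ≠ z := by
            intro heq
            apply hx0
            rw [← hztwin]
            exact adj_mem_cnbr (heq ▸ hadjmx0)
          have : m ∈ cnbr G z := hztwin ▸ hmv
          exact ⟨m, Or.inl (Or.inr rfl), (adj_of_mem_cnbr this hmnez).symm⟩
        · by_cases hcross : ∃ x, G.Adj z x ∧ x ∉ cnbr G v
          · obtain ⟨x, hadjzx, hxv⟩ := hcross
            obtain ⟨σx, hσx, hxσx⟩ := exists_block hD.1 x
            have hσxv : σx ≠ v := by
              intro heq
              exact hxv (heq ▸ hxσx)
            have hznet : z ≠ t := by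
              intro heq
              exact hztwin (heq ▸ ht)
            have := (hysel σx ⟨hσx, hσxv⟩).2 z hzv hzeqv hznet ⟨x, hadjzx, hxσx⟩
            exact ⟨ysel σx, Or.inr ⟨σx, ⟨hσx, by simp [hσxv]⟩, rfl⟩, this.symm⟩
          · -- z ∈ Dset v
            push_neg at hcross
            have hzD : z ∈ Dset G v := by
              refine ⟨adj_of_mem_cnbr hzv hzeqv, hztwin, ?_⟩
              intro w hw
              rcases mem_cnbr.1 hw with heq | hadj
              · exact heq ▸ hzv
              · exact hcross w hadj
            have : G.Adj m z := hsubm hzD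
            exact ⟨m, Or.inl (Or.inr rfl), this⟩
    · -- other blocks
      by_cases hzeq : z = cz
      · refine ⟨ysel cz, Or.inr ⟨cz, ⟨hcz, by simp [hczv]⟩, rfl⟩, ?_⟩
        rw [hzeq]
        exact ((hysel cz ⟨hcz, hczv⟩).1).symm
      · exact ⟨cz, Or.inl (Or.inl ⟨hcz, by simp [hczv]⟩), adj_of_mem_cnbr hzcz hzeq⟩
  have hγ1 : 1 ≤ domNum G := by
    rw [← hD.2]
    have : 0 < D.ncard := (Set.ncard_pos (Set.toFinite D)).2 ⟨v, hv⟩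
    omega
  have hd1 : (D \ {v}).ncard = D.ncard - 1 := by
    rw [Set.ncard_diff (by rintro a rfl; exact hv) (Set.toFinite _), Set.ncard_singleton]
  have h1 : T.ncard ≤ ((D \ {v}) ∪ {m}).ncard + (ysel '' (D \ {v})).ncard :=
    Set.ncard_union_le _ _
  have h2 : ((D \ {v}) ∪ {m}).ncard ≤ (D \ {v}).ncard + ({m} : Set V).ncard :=
    Set.ncard_union_le _ _
  have h3 : ({m} : Set V).ncard = 1 := Set.ncard_singleton m
  have h4 : (ysel '' (D \ {v})).ncard ≤ (D \ {v}).ncard := Set.ncard_image_le (Set.toFinite _)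
  have h5 := totalDomNum_le htot
  have h6 := hD.2
  omega

theorem stmt9' (G : SimpleGraph V) (hiso : NoIsolated G)
    (hH1 : Free H1 G) (hH2 : Free H2 G) (hC6 : Free (cycleGraph 6) G)
    (h : totalDomNum G = 2 * domNum G) :
    (∃! D : Set V, IsMinDomSet G D) ↔ ∀ v, Special G v → ∀ u ∈ Tset G v, u = v := by
  obtain ⟨D0, hD0⟩ := exists_minDomSet G
  constructor
  · rintro ⟨Du, hDu, huniq⟩ z hz u' hu'
    by_contra hne
    obtain ⟨w, hw, hzw⟩ := exists_block hDu.1 z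
    have hztwin : cnbr G z = cnbr G w := special_twin_center hiso h hDu hw hzw hz
    have hstw : ∃ s, s ≠ w ∧ cnbr G s = cnbr G w := by
      by_cases hzw' : z = w
      · refine ⟨u', ?_, ?_⟩
        · intro heq
          exact hne (heq.trans hzw'.symm)
        · have h1 : cnbr G u' = cnbr G z := hu'
          rw [h1, hzw']
      · exact ⟨z, hzw', hztwin⟩
    obtain ⟨s, hsw, hscn⟩ := hstw
    have hsD : s ∉ Du := by
      intro hsDu
      exact Set.disjoint_left.1 (pack hiso h hDu s hsDu w hw hsw) (self_mem_cnbr s)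
        (by rw [← hscn]; exact self_mem_cnbr s)
    set D2 : Set V := insert s (Du \ {w}) with hD2
    have hD2dom : IsDomSet G D2 := by
      intro y hy
      by_cases hyw : y ∈ cnbr G w
      · have hys : y ≠ s := by
          intro heq
          exact hy (heq ▸ Set.mem_insert s _)
        have hycs : y ∈ cnbr G s := by rw [hscn]; exact hyw
        exact ⟨s, Set.mem_insert s _, adj_of_mem_cnbr hycs hys⟩
      · have hyDu : y ∉ Du := by
          intro hyDu
          apply hy
          refine Set.mem_insert_of_mem s ⟨hyDu, ?_⟩
          intro heq
          exact hyw ((Set.mem_singleton_iff.1 heq) ▸ self_mem_cnbr y)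
        obtain ⟨c, hc, hadj⟩ := hDu.1 y hyDu
        have hcw : c ≠ w := by
          intro heq
          exact hyw (heq ▸ adj_mem_cnbr hadj)
        exact ⟨c, Set.mem_insert_of_mem s ⟨hc, hcw⟩, hadj⟩
    have hγ1 : 1 ≤ Du.ncard := by
      have : 0 < Du.ncard := (Set.ncard_pos (Set.toFinite Du)).2 ⟨w, hw⟩
      omega
    have hdiffw : (Du \ {w}).ncard = Du.ncard - 1 := by
      rw [Set.ncard_diff (by rintro a rfl; exact hw) (Set.toFinite _), Set.ncard_singleton]
    have hD2card : D2.ncard = domNum G := by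
      rw [hD2, Set.ncard_insert_of_notMem (fun hmem => hsD hmem.1) (Set.toFinite _), hdiffw,
        ← hDu.2]
      omega
    have hD2eq : D2 = Du := huniq D2 ⟨hD2dom, hD2card⟩
    have hwD2 : w ∈ D2 := by rw [hD2eq]; exact hw
    rcases Set.mem_insert_iff.1 hwD2 with heq | hmem
    · exact hsw heq.symm
    · exact hmem.2 rfl
  · intro hrhs
    refine ⟨D0, hD0, ?_⟩
    intro D' hD'
    have hsub : D0 ⊆ D' := by
      intro v hv
      by_contra hvD'
      obtain ⟨u, hu, hadj⟩ := hD'.1 v hvD'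
      have huv : u ∈ cnbr G v := mem_cnbr_comm.1 (adj_mem_cnbr hadj)
      have htwin : cnbr G u = cnbr G v := twin_lemma hiso h hC6 hD0 hD' v hv u hu huv
      have hune : u ≠ v := by
        intro heq
        exact hvD' (heq ▸ hu)
      have hspec : Special G v := center_twin_special hiso h hH1 hH2 hC6 hD0 hv htwin hune
      exact hune (hrhs v hspec u htwin)
    have hcard : D'.ncard ≤ D0.ncard := by rw [hD'.2, hD0.2]
    exact (Set.eq_of_subset_of_ncard_le hsub hcard (Set.toFinite D')).symm

end Fin

/-- An `(H₁,H₂,C₆)`-free graph `G` with no isolated vertices satisfying `γₜ(G) = 2γ(G)` has a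
unique minimum dominating set iff no special vertex has a true twin other than itself. -/
theorem stmt9 {V : Type*} [Fintype V] (G : SimpleGraph V) (hiso : NoIsolated G)
    (hH1 : Free H1 G) (hH2 : Free H2 G) (hC6 : Free (cycleGraph 6) G)
    (h : totalDomNum G = 2 * domNum G) :
    (∃! D : Set V, IsMinDomSet G D) ↔ ∀ v, Special G v → ∀ u ∈ Tset G v, u = v :=
  stmt9' G hiso hH1 hH2 hC6 h

end TotalDom
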